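/- Let G be a finite simple graph, A ⊆ V(G), r,p ≥ 0 integers, and let S be an (r,p)-guarding set for A in G. Suppose that for some function f : ℕ×ℕ → ℕ that is non-decreasing in its second argument, |Π_{r,G}[V(G) → A']| ≤ f(r,|A'|) for every A' ⊆ V(G). Then |Π_{r,G}[V(G) → A]| ≤ f(r,p)·|S|. -/

import Mathlib

open SimpleGraph

/-- The profile of `u` on `A` at distance `r`: maps `a ∈ A` to `dist_G(u,a)` if this is
at most `r`, and to `∞` otherwise. -/
noncomputable def SimpleGraph.profile {V : Type*} (G : SimpleGraph V) (r : ℕ) (A : Set V)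
    (u : V) : A → ℕ∞ :=
  fun a => if G.edist u (a : V) ≤ r then G.edist u (a : V) else ⊤

/-- `Π_{r,G}[U → A]`: the set of distance-`r` profiles on `A` of vertices of `U`,
excluding the constant-`∞` profile. -/
noncomputable def SimpleGraph.profiles {V : Type*} (G : SimpleGraph V) (r : ℕ) (U A : Set V) :
    Set (A → ℕ∞) :=
  {f | ∃ u ∈ U, f = G.profile r A u} \ {fun _ => ⊤}

/-- An `(r,p)`-guarding set for `A` in `G`: a family of vertex sets, each of size at most `p`,
such that for every vertex `v` (having at least one `(v,A)`-path of length at most `r`)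
some member of the family intersects every `(v,A)`-path of length at most `r`. -/
def SimpleGraph.IsGuardingSet {V : Type*} (G : SimpleGraph V) (A : Set V) (r p : ℕ)
    (F : Set (Set V)) : Prop :=
  (∀ S ∈ F, S.ncard ≤ p) ∧
  ∀ v : V, (∃ a ∈ A, ∃ w : G.Walk v a, w.IsPath ∧ w.length ≤ r) →
    ∃ S ∈ F, ∀ a ∈ A, ∀ w : G.Walk v a, w.IsPath → w.length ≤ r →
      ∃ x ∈ S, x ∈ w.support

section Aux
set_option linter.unusedSectionVars false

lemma ncard_biUnion_le' {α β : Type*} {F : Set α} (hF : F.Finite) (g : α → Set β) (k : ℕ)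
    (hk : ∀ S ∈ F, (g S).ncard ≤ k) :
    (⋃ S ∈ F, g S).ncard ≤ k * F.ncard := by
  revert hk
  refine Set.Finite.induction_on (motive := fun F _ => (∀ S ∈ F, (g S).ncard ≤ k) →
    (⋃ S ∈ F, g S).ncard ≤ k * F.ncard) F hF (by simp) ?_
  intro a s ha hs ih hk
  rw [Set.biUnion_insert]
  calc (g a ∪ ⋃ S ∈ s, g S).ncard ≤ (g a).ncard + (⋃ S ∈ s, g S).ncard :=
        Set.ncard_union_le _ _
    _ ≤ k + k * s.ncard := by
        gcongr
        · exact hk a (Set.mem_insert _ _)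
        · exact ih (fun S hS => hk S (Set.mem_insert_of_mem _ hS))
    _ = k * (insert a s).ncard := by
        rw [Set.ncard_insert_of_notMem ha hs]; ring

variable {V : Type} [Fintype V] (G : SimpleGraph V)

lemma edist_split {u a x : V} (w : G.Walk u a) (hx : x ∈ w.support) :
    G.edist u x + G.edist x a ≤ w.length := by
  classical
  have hspec := w.take_spec hx
  have hlen : (w.takeUntil x hx).length + (w.dropUntil x hx).length = w.length := by
    have := congr_arg Walk.length hspec
    rwa [Walk.length_append] at this
  calc G.edist u x + G.edist x a
      ≤ ((w.takeUntil x hx).length : ℕ∞) + ((w.dropUntil x hx).length : ℕ∞) := by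
        gcongr <;> exact SimpleGraph.edist_le _
    _ = (w.length : ℕ∞) := by exact_mod_cast congr_arg Nat.cast hlen

noncomputable def recA (r : ℕ) (A S : Set V) (h : S → ℕ∞) : A → ℕ∞ :=
  fun a => if (⨅ x : S, h x + G.edist x a) ≤ r then ⨅ x : S, h x + G.edist x a else ⊤

lemma recA_profile (r : ℕ) (A S : Set V) (u : V)
    (hguard : ∀ a ∈ A, ∀ w : G.Walk u a, w.IsPath → w.length ≤ r →
      ∃ x ∈ S, x ∈ w.support) :
    recA G r A S (G.profile r S u) = G.profile r A u := by
  classical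
  funext a
  have hrfl : recA G r A S (G.profile r S u) a =
      if (⨅ x : S, G.profile r S u x + G.edist x a) ≤ r then
        (⨅ x : S, G.profile r S u x + G.edist x a) else ⊤ := rfl
  rw [hrfl]
  have hlow : ∀ x : S, G.edist u a ≤ G.profile r S u x + G.edist x a := by
    intro x
    unfold SimpleGraph.profile
    split
    · exact G.edist_triangle
    · simp
  have hI : G.edist u a ≤ ⨅ x : S, G.profile r S u x + G.edist x a := le_iInf hlow
  by_cases hd : G.edist u (a : V) ≤ r
  · -- find x as in guard, via a shortest walk
    have hne : G.edist u (a : V) ≠ ⊤ := by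
      intro h; rw [h] at hd; exact (by simp : ¬ (⊤ : ℕ∞) ≤ r) hd
    obtain ⟨w, hw⟩ := SimpleGraph.exists_walk_of_edist_ne_top hne
    have hblen : (w.bypass.length : ℕ∞) ≤ r := by
      calc (w.bypass.length : ℕ∞) ≤ w.length := by exact_mod_cast w.length_bypass_le
        _ = G.edist u a := hw
        _ ≤ r := hd
    have hblen' : w.bypass.length ≤ r := by exact_mod_cast hblen
    obtain ⟨x, hxS, hxsup⟩ := hguard a a.2 w.bypass w.bypass_isPath hblen'
    have hxsplit : G.edist u x + G.edist x a ≤ G.edist u a := by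
      calc G.edist u x + G.edist x a ≤ w.bypass.length := edist_split G w.bypass hxsup
        _ ≤ w.length := by exact_mod_cast w.length_bypass_le
        _ = G.edist u a := hw
    have hux : G.edist u x ≤ r := le_trans (le_trans le_self_add hxsplit) hd
    have hterm : G.profile r S u ⟨x, hxS⟩ + G.edist x a ≤ G.edist u a := by
      unfold SimpleGraph.profile
      rw [if_pos hux]
      exact hxsplit
    have hIeq : (⨅ x : S, G.profile r S u x + G.edist x a) = G.edist u a :=
      le_antisymm (iInf_le_of_le ⟨x, hxS⟩ hterm) hI
    rw [hIeq, if_pos hd]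
    unfold SimpleGraph.profile
    rw [if_pos hd]
  · rw [if_neg (fun h => hd (le_trans hI h))]
    unfold SimpleGraph.profile
    rw [if_neg hd]

end Aux

/-- If `F` is an `(r,p)`-guarding set for `A` in `G` and `f` (non-decreasing in its second
argument) bounds `|Π_{r,G}[V(G) → A']| ≤ f(r,|A'|)` for all `A'`, then
`|Π_{r,G}[V(G) → A]| ≤ f(r,p)·|F|`. -/
theorem guarding_set_implies_profile_bound
    {V : Type} [Fintype V] (G : SimpleGraph V) (A : Set V) (r p : ℕ)
    (F : Set (Set V)) (hguard : G.IsGuardingSet A r p F)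
    (f : ℕ → ℕ → ℕ) (hmono : ∀ s : ℕ, Monotone (f s))
    (hf : ∀ A' : Set V, (G.profiles r Set.univ A').ncard ≤ f r A'.ncard) :
    (G.profiles r Set.univ A).ncard ≤ f r p * F.ncard := by
  classical
  obtain ⟨hcard, hg⟩ := hguard
  have hPfin : ∀ S : Set V, (G.profiles r Set.univ S).Finite := fun S =>
    (Set.finite_range (G.profile r S)).subset (by
      rintro g ⟨⟨u, -, rfl⟩, -⟩; exact ⟨u, rfl⟩)
  have hsub : G.profiles r Set.univ A ⊆
      ⋃ S ∈ F, recA G r A S '' (G.profiles r Set.univ S) := by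
    rintro g ⟨⟨u, -, rfl⟩, hne⟩
    have hne' : G.profile r A u ≠ fun _ => ⊤ := hne
    rw [Function.ne_iff] at hne'
    obtain ⟨a, ha⟩ := hne'
    have hd : G.edist u (a : V) ≤ r := by
      by_contra hd
      exact ha (by unfold SimpleGraph.profile; rw [if_neg hd])
    have hne2 : G.edist u (a : V) ≠ ⊤ := fun h => by
      rw [h] at hd; exact (by simp : ¬ (⊤ : ℕ∞) ≤ r) hd
    obtain ⟨w, hw⟩ := SimpleGraph.exists_walk_of_edist_ne_top hne2
    have hblen : w.bypass.length ≤ r := by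
      have : (w.bypass.length : ℕ∞) ≤ r := by
        calc (w.bypass.length : ℕ∞) ≤ w.length := by exact_mod_cast w.length_bypass_le
          _ = G.edist u a := hw
          _ ≤ r := hd
      exact_mod_cast this
    obtain ⟨S, hSF, hSg⟩ := hg u ⟨a, a.2, w.bypass, w.bypass_isPath, hblen⟩
    refine Set.mem_biUnion hSF ?_
    refine ⟨G.profile r S u, ⟨⟨u, trivial, rfl⟩, ?_⟩, recA_profile G r A S u hSg⟩
    -- profile on S is not constant ⊤
    obtain ⟨x, hxS, hxsup⟩ := hSg a a.2 w.bypass w.bypass_isPath hblen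
    have hux : G.edist u x ≤ r := by
      have h1 : G.edist u x + G.edist x a ≤ (w.bypass.length : ℕ∞) :=
        edist_split G w.bypass hxsup
      have h2 : (w.bypass.length : ℕ∞) ≤ r := by exact_mod_cast hblen
      exact le_trans (le_trans le_self_add h1) h2
    intro hcontra
    have : G.profile r S u ⟨x, hxS⟩ = ⊤ := by
      rw [Set.mem_singleton_iff] at hcontra
      rw [hcontra]
    rw [SimpleGraph.profile, if_pos hux] at this
    rw [this] at hux
    exact (by simp : ¬ (⊤ : ℕ∞) ≤ r) hux
  calc (G.profiles r Set.univ A).ncard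
      ≤ (⋃ S ∈ F, recA G r A S '' (G.profiles r Set.univ S)).ncard :=
        Set.ncard_le_ncard hsub
          ((Set.toFinite F).biUnion (fun S _ => (hPfin S).image _))
    _ ≤ f r p * F.ncard := by
        refine ncard_biUnion_le' (Set.toFinite F) _ (f r p) (fun S hS => ?_)
        calc (recA G r A S '' (G.profiles r Set.univ S)).ncard
            ≤ (G.profiles r Set.univ S).ncard := Set.ncard_image_le (hPfin S)
          _ ≤ f r S.ncard := hf S
          _ ≤ f r p := hmono r (hcard S hS)
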